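/- Fix n ≥ 1 and set N = 2ⁿ − 1. Then for every n-tuple (y₁,…,yₙ) of positive integers there exists a unique reduced N-tuple (z₁,…,z_N) of positive integers such that y_j = ∏_{h=1}^{N} z_h^{ε_j(h)} for every j ∈ {1,…,n}; moreover this tuple satisfies lcm(y₁,…,yₙ) = ∏_{h=1}^{N} z_h. -/

import Mathlib

/-- `h` is dominated by `l`: every binary digit of `h` is at most the
corresponding binary digit of `l`. -/
def Dominates (h l : ℕ) : Prop := ∀ j : ℕ, h.testBit j = true → l.testBit j = true

/-- An `N`-tuple `(z₁, …, z_N)` (indexed here by `Fin N`, with `i : Fin N`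
corresponding to the integer `i + 1 ∈ {1, …, N}`) is reduced if
`gcd(z_h, z_ℓ) = 1` whenever `h` and `ℓ` are incomparable for domination. -/
def ReducedTuple {N : ℕ} (z : Fin N → ℕ) : Prop :=
  ∀ h l : Fin N, ¬ Dominates ((h : ℕ) + 1) ((l : ℕ) + 1) →
    ¬ Dominates ((l : ℕ) + 1) ((h : ℕ) + 1) → Nat.gcd (z h) (z l) = 1

namespace St3

instance : Std.Commutative (α := ℕ) (· ||| ·) := ⟨Nat.lor_comm⟩
instance : Std.Associative (α := ℕ) (· ||| ·) := ⟨Nat.lor_assoc⟩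

/-- the set of binary digits of `h`, as a subset of `Fin n`. -/
def bitset (n h : ℕ) : Finset (Fin n) := Finset.univ.filter (fun j => h.testBit (j : ℕ))

/-- the mask with bits `S`. -/
def maskOf {n : ℕ} (S : Finset (Fin n)) : ℕ :=
  Finset.fold (· ||| ·) 0 (fun j : Fin n => (2 ^ (j : ℕ) : ℕ)) S

lemma mem_bitset {n h : ℕ} {j : Fin n} : j ∈ bitset n h ↔ h.testBit (j : ℕ) := by
  simp [bitset]

lemma testBit_maskOf {n : ℕ} (S : Finset (Fin n)) (k : ℕ) :
    (maskOf S).testBit k = true ↔ ∃ j ∈ S, (j : ℕ) = k := by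
  classical
  induction S using Finset.induction_on with
  | empty => simp [maskOf, Nat.zero_testBit]
  | insert _ _ ha ih =>
      rw [maskOf, Finset.fold_insert ha]
      simp only [Nat.testBit_lor, Bool.or_eq_true, Nat.testBit_two_pow, maskOf] at *
      simp [ih, decide_eq_true_eq]

lemma maskOf_lt {n : ℕ} (S : Finset (Fin n)) : maskOf S < 2 ^ n := by
  classical
  induction S using Finset.induction_on with
  | empty =>
      rw [maskOf, Finset.fold_empty]
      exact Nat.pow_pos (by norm_num)
  | insert _ _ ha ih =>
      rw [maskOf, Finset.fold_insert ha]
      exact Nat.or_lt_two_pow (Nat.pow_lt_pow_right (by norm_num) (Fin.is_lt _)) ih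

lemma maskOf_empty {n : ℕ} : maskOf (∅ : Finset (Fin n)) = 0 := by
  rw [maskOf, Finset.fold_empty]

lemma maskOf_pos {n : ℕ} {S : Finset (Fin n)} (hS : S.Nonempty) : 0 < maskOf S := by
  obtain ⟨j, hj⟩ := hS
  rcases Nat.eq_zero_or_pos (maskOf S) with h | h
  · have := (testBit_maskOf S (j : ℕ)).2 ⟨j, hj, rfl⟩
    rw [h, Nat.zero_testBit] at this
    exact absurd this (by simp)
  · exact h

lemma bitset_maskOf {n : ℕ} (S : Finset (Fin n)) : bitset n (maskOf S) = S := by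
  ext j
  rw [mem_bitset]
  constructor
  · intro hj
    obtain ⟨j', hj', he⟩ := (testBit_maskOf S (j : ℕ)).1 hj
    rwa [show j' = j from Fin.ext he] at hj'
  · exact fun h => (testBit_maskOf S (j : ℕ)).2 ⟨j, h, rfl⟩

lemma maskOf_bitset {n h : ℕ} (hh : h < 2 ^ n) : maskOf (bitset n h) = h := by
  apply Nat.eq_of_testBit_eq
  intro k
  rcases lt_or_ge k n with hk | hk
  · cases hb : h.testBit k with
    | false =>
        rw [Bool.eq_false_iff]
        intro hc
        obtain ⟨j, hj, he⟩ := (testBit_maskOf _ k).1 hc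
        rw [mem_bitset, he, hb] at hj
        exact absurd hj (by simp)
    | true =>
        rw [(testBit_maskOf _ k).2 ⟨⟨k, hk⟩, mem_bitset.2 (by simpa using hb), rfl⟩]
  · have h1 : h.testBit k = false :=
      Nat.testBit_eq_false_of_lt (lt_of_lt_of_le hh (Nat.pow_le_pow_right (by norm_num) hk))
    have h2 : (maskOf (bitset n h)).testBit k = false := by
      rw [Bool.eq_false_iff]
      intro hc
      obtain ⟨j, _, he⟩ := (testBit_maskOf _ k).1 hc
      have := j.isLt
      omega
    rw [h1, h2]

lemma dominates_iff_bitset_subset {n h l : ℕ} (hh : h < 2 ^ n) :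
    Dominates h l ↔ bitset n h ⊆ bitset n l := by
  constructor
  · intro hd j hj
    exact mem_bitset.2 (hd _ (mem_bitset.1 hj))
  · intro hsub k hk
    have hkn : k < n := by
      by_contra hc
      rw [Nat.testBit_eq_false_of_lt
        (lt_of_lt_of_le hh (Nat.pow_le_pow_right (by norm_num) (le_of_not_gt hc)))] at hk
      exact absurd hk (by simp)
    exact mem_bitset.1 (hsub (show (⟨k, hkn⟩ : Fin n) ∈ bitset n h from mem_bitset.2 hk))

/-- the upper set of the profile `a` at threshold `t`. -/
def upSet (a : Fin n → ℕ) (t : ℕ) : Finset (Fin n) := Finset.univ.filter (fun j => t ≤ a j)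

/-- the thresholds whose upper set is exactly `S`. -/
def tset (a : Fin n → ℕ) (S : Finset (Fin n)) : Finset ℕ :=
  (Finset.Icc 1 (Finset.univ.sup a)).filter (fun t => upSet a t = S)

/-- the canonical exponent attached to the subset `S`. -/
def ee (a : Fin n → ℕ) (S : Finset (Fin n)) : ℕ := (tset a S).card

lemma mem_upSet {a : Fin n → ℕ} {t : ℕ} {j : Fin n} : j ∈ upSet a t ↔ t ≤ a j := by
  simp [upSet]

lemma mem_tset {a : Fin n → ℕ} {S : Finset (Fin n)} {t : ℕ} :
    t ∈ tset a S ↔ (1 ≤ t ∧ t ≤ Finset.univ.sup a) ∧ upSet a t = S := by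
  simp [tset, Finset.mem_Icc, and_assoc]

lemma ee_empty (a : Fin n → ℕ) : ee a ∅ = 0 := by
  rw [ee, Finset.card_eq_zero, Finset.eq_empty_iff_forall_notMem]
  intro t ht
  obtain ⟨⟨h1, h2⟩, h3⟩ := mem_tset.1 ht
  have : Finset.univ.sup a < t := by
    rw [Finset.sup_lt_iff (show (⊥ : ℕ) < t from h1)]
    intro j _
    have : j ∉ upSet a t := by rw [h3]; exact Finset.notMem_empty j
    rw [mem_upSet] at this
    omega
  omega

lemma ee_nonempty {a : Fin n → ℕ} {S : Finset (Fin n)} (h : 0 < ee a S) : S.Nonempty := by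
  rw [ee, Finset.card_pos] at h
  obtain ⟨t, ht⟩ := h
  obtain ⟨⟨h1, h2⟩, h3⟩ := mem_tset.1 ht
  obtain ⟨j, _, hj⟩ := (Finset.le_sup_iff (show (⊥ : ℕ) < t from h1)).1 h2
  exact ⟨j, h3 ▸ mem_upSet.2 hj⟩

lemma ee_chain {a : Fin n → ℕ} {S S' : Finset (Fin n)} (h : 0 < ee a S) (h' : 0 < ee a S') :
    S ⊆ S' ∨ S' ⊆ S := by
  rw [ee, Finset.card_pos] at h h'
  obtain ⟨t, ht⟩ := h
  obtain ⟨t', ht'⟩ := h'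
  obtain ⟨-, h3⟩ := mem_tset.1 ht
  obtain ⟨-, h3'⟩ := mem_tset.1 ht'
  rcases le_total t t' with hle | hle
  · right
    rw [← h3, ← h3']
    intro j hj
    exact mem_upSet.2 (le_trans hle (mem_upSet.1 hj))
  · left
    rw [← h3, ← h3']
    intro j hj
    exact mem_upSet.2 (le_trans hle (mem_upSet.1 hj))

lemma sum_ee (a : Fin n → ℕ) (j : Fin n) :
    ∑ S ∈ Finset.univ.filter (fun S : Finset (Fin n) => j ∈ S), ee a S = a j := by
  classical
  have hdisj : ∀ S ∈ Finset.univ.filter (fun S : Finset (Fin n) => j ∈ S),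
      ∀ S' ∈ Finset.univ.filter (fun S : Finset (Fin n) => j ∈ S), S ≠ S' →
      Disjoint (tset a S) (tset a S') := by
    intro S _ S' _ hne
    rw [Finset.disjoint_left]
    intro t ht ht'
    exact hne ((mem_tset.1 ht).2 ▸ (mem_tset.1 ht').2 ▸ rfl)
  have hcard := Finset.card_biUnion hdisj
  have hbi : (Finset.univ.filter (fun S : Finset (Fin n) => j ∈ S)).biUnion (tset a)
      = Finset.Icc 1 (a j) := by
    ext t
    simp only [Finset.mem_biUnion, Finset.mem_filter, Finset.mem_univ, true_and,
      Finset.mem_Icc]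
    constructor
    · rintro ⟨S, hjS, ht⟩
      obtain ⟨⟨h1, _⟩, h3⟩ := mem_tset.1 ht
      exact ⟨h1, mem_upSet.1 (h3 ▸ hjS)⟩
    · rintro ⟨h1, h2⟩
      refine ⟨upSet a t, mem_upSet.2 h2, mem_tset.2 ⟨⟨h1, ?_⟩, rfl⟩⟩
      exact le_trans h2 (Finset.le_sup (Finset.mem_univ j))
  simp only [ee]
  rw [← hcard, hbi, Nat.card_Icc]
  omega

lemma sum_ee_total (a : Fin n → ℕ) :
    ∑ S : Finset (Fin n), ee a S = Finset.univ.sup a := by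
  classical
  have hdisj : ∀ S ∈ (Finset.univ : Finset (Finset (Fin n))),
      ∀ S' ∈ (Finset.univ : Finset (Finset (Fin n))), S ≠ S' →
      Disjoint (tset a S) (tset a S') := by
    intro S _ S' _ hne
    rw [Finset.disjoint_left]
    intro t ht ht'
    exact hne ((mem_tset.1 ht).2 ▸ (mem_tset.1 ht').2 ▸ rfl)
  have hcard := Finset.card_biUnion hdisj
  have hbi : (Finset.univ : Finset (Finset (Fin n))).biUnion (tset a)
      = Finset.Icc 1 (Finset.univ.sup a) := by
    ext t
    simp only [Finset.mem_biUnion, Finset.mem_univ, true_and, Finset.mem_Icc]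
    constructor
    · rintro ⟨S, ht⟩
      exact (mem_tset.1 ht).1
    · rintro ⟨h1, h2⟩
      exact ⟨upSet a t, mem_tset.2 ⟨⟨h1, h2⟩, rfl⟩⟩
  simp only [ee]
  rw [← hcard, hbi, Nat.card_Icc]
  omega

lemma ee_le_sup (a : Fin n → ℕ) (S : Finset (Fin n)) : ee a S ≤ Finset.univ.sup a := by
  calc ee a S ≤ (Finset.Icc 1 (Finset.univ.sup a)).card := Finset.card_filter_le _ _
  _ = Finset.univ.sup a := by rw [Nat.card_Icc]; omega

lemma ee_unique (a : Fin n → ℕ) (e' : Finset (Fin n) → ℕ)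
    (h0 : e' ∅ = 0)
    (hchain : ∀ S S', 0 < e' S → 0 < e' S' → S ⊆ S' ∨ S' ⊆ S)
    (hsum : ∀ j, ∑ S ∈ Finset.univ.filter (fun S => j ∈ S), e' S = a j) :
    ∀ S, e' S = ee a S := by
  classical
  have hsum' : ∀ j, ∑ S ∈ Finset.univ.filter (fun S => 0 < e' S ∧ j ∈ S), e' S = a j := by
    intro j
    rw [← hsum j]
    apply Finset.sum_subset
    · intro S hS
      rw [Finset.mem_filter] at *
      exact ⟨hS.1, hS.2.2⟩
    · intro S hS hS'
      rw [Finset.mem_filter] at hS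
      by_contra hc
      exact hS' (Finset.mem_filter.2 ⟨hS.1, Nat.pos_of_ne_zero hc, hS.2⟩)
  have hmin : ∀ j : Fin n, 0 < a j → ∃ V, (0 < e' V ∧ j ∈ V) ∧
      ∀ S', 0 < e' S' → j ∈ S' → V ⊆ S' := by
    intro j hj
    have hne : (Finset.univ.filter (fun S => 0 < e' S ∧ j ∈ S)).Nonempty := by
      by_contra hc
      rw [Finset.not_nonempty_iff_eq_empty] at hc
      rw [← hsum' j, hc, Finset.sum_empty] at hj
      exact lt_irrefl 0 hj
    obtain ⟨V, hV, hVmin⟩ := Finset.exists_min_image _ Finset.card hne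
    rw [Finset.mem_filter] at hV
    refine ⟨V, hV.2, ?_⟩
    intro S' h1 h2
    rcases hchain V S' hV.2.1 h1 with h | h
    · exact h
    · have hc := hVmin S' (Finset.mem_filter.2 ⟨Finset.mem_univ _, h1, h2⟩)
      exact le_of_eq (Finset.eq_of_subset_of_card_le h hc).symm
  intro S
  rcases Nat.eq_zero_or_pos (e' S) with hzero | hpos
  · -- e' S = 0 : show ee a S = 0
    rw [hzero]
    symm
    rw [ee, Finset.card_eq_zero, Finset.eq_empty_iff_forall_notMem]
    intro t ht
    obtain ⟨⟨h1, h2⟩, h3⟩ := mem_tset.1 ht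
    have hSne : S.Nonempty := by
      obtain ⟨j, -, hj⟩ := (Finset.le_sup_iff (show (⊥ : ℕ) < t from h1)).1 h2
      exact ⟨j, h3 ▸ mem_upSet.2 hj⟩
    have hat : ∀ j ∈ S, t ≤ a j := by
      intro j hj
      rw [← h3] at hj
      exact mem_upSet.1 hj
    have hanot : ∀ j, j ∉ S → a j < t := by
      intro j hj
      by_contra hc
      push_neg at hc
      exact hj (h3 ▸ mem_upSet.2 hc)
    have hVsub : ∀ j ∈ S, ∃ V, (0 < e' V ∧ j ∈ V) ∧ V ⊆ S ∧
        ∀ S', 0 < e' S' → j ∈ S' → V ⊆ S' := by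
      intro j hj
      obtain ⟨V, hV1, hV2⟩ := hmin j (by have := hat j hj; omega)
      refine ⟨V, hV1, ?_, hV2⟩
      intro j1 hj1
      by_contra hj1S
      have hle : a j ≤ a j1 := by
        rw [← hsum' j, ← hsum' j1]
        apply Finset.sum_le_sum_of_subset
        intro S' hS'
        rw [Finset.mem_filter] at *
        obtain ⟨-, hh1, hh2⟩ := hS'
        exact ⟨Finset.mem_univ _, hh1, hV2 S' hh1 hh2 hj1⟩
      have h4 := hat j hj
      have h5 := hanot j1 hj1S
      omega
    have hCne : (Finset.univ.filter (fun S' => 0 < e' S' ∧ S' ⊆ S)).Nonempty := by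
      obtain ⟨j, hj⟩ := hSne
      obtain ⟨V, hV1, hV2, -⟩ := hVsub j hj
      exact ⟨V, Finset.mem_filter.2 ⟨Finset.mem_univ _, hV1.1, hV2⟩⟩
    obtain ⟨W, hW, hWmax⟩ := Finset.exists_max_image _ Finset.card hCne
    rw [Finset.mem_filter] at hW
    have hWne : W ≠ S := by
      intro he
      rw [he, hzero] at hW
      exact lt_irrefl 0 hW.2.1
    obtain ⟨j2, hj2S, hj2W⟩ :=
      Finset.exists_of_ssubset (Finset.ssubset_iff_subset_ne.2 ⟨hW.2.2, hWne⟩)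
    obtain ⟨V, hV1, hV2, hV3⟩ := hVsub j2 hj2S
    have hcard := hWmax V (Finset.mem_filter.2 ⟨Finset.mem_univ _, hV1.1, hV2⟩)
    rcases hchain V W hV1.1 hW.2.1 with h | h
    · exact hj2W (h hV1.2)
    · exact hj2W ((Finset.eq_of_subset_of_card_le h hcard) ▸ hV1.2)
  · -- e' S > 0
    have hSne : S.Nonempty := by
      rw [Finset.nonempty_iff_ne_empty]
      intro he
      rw [he, h0] at hpos
      exact lt_irrefl 0 hpos
    -- Claim A
    have hA : ∃ j ∈ S, Finset.univ.filter (fun S' => 0 < e' S' ∧ j ∈ S')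
        = Finset.univ.filter (fun S' => 0 < e' S' ∧ S ⊆ S') := by
      by_cases hD : (Finset.univ.filter (fun S' => 0 < e' S' ∧ S' ⊂ S)).Nonempty
      · obtain ⟨W, hW, hWmax⟩ := Finset.exists_max_image _ Finset.card hD
        rw [Finset.mem_filter] at hW
        obtain ⟨j, hjS, hjW⟩ := Finset.exists_of_ssubset hW.2.2
        refine ⟨j, hjS, ?_⟩
        ext S'
        simp only [Finset.mem_filter, Finset.mem_univ, true_and]
        constructor
        · rintro ⟨hS', hjS'⟩
          refine ⟨hS', ?_⟩
          rcases hchain S' S hS' hpos with h | h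
          · by_cases heq : S' = S
            · exact le_of_eq heq.symm
            · have hmem : S' ∈ Finset.univ.filter (fun S' => 0 < e' S' ∧ S' ⊂ S) :=
                Finset.mem_filter.2 ⟨Finset.mem_univ _, hS',
                  Finset.ssubset_iff_subset_ne.2 ⟨h, heq⟩⟩
              have hcard := hWmax S' hmem
              rcases hchain S' W hS' hW.2.1 with h2 | h2
              · exact absurd (h2 hjS') hjW
              · exact absurd ((Finset.eq_of_subset_of_card_le h2 hcard).symm ▸ hjS') hjW
          · exact h
        · rintro ⟨hS', hsub⟩
          exact ⟨hS', hsub hjS⟩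
      · obtain ⟨j, hjS⟩ := hSne
        refine ⟨j, hjS, ?_⟩
        ext S'
        simp only [Finset.mem_filter, Finset.mem_univ, true_and]
        constructor
        · rintro ⟨hS', hjS'⟩
          refine ⟨hS', ?_⟩
          rcases hchain S' S hS' hpos with h | h
          · by_cases heq : S' = S
            · exact le_of_eq heq.symm
            · exact absurd ⟨S', Finset.mem_filter.2 ⟨Finset.mem_univ _, hS',
                Finset.ssubset_iff_subset_ne.2 ⟨h, heq⟩⟩⟩ hD
          · exact h
        · rintro ⟨hS', hsub⟩
          exact ⟨hS', hsub hjS⟩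
    -- Claim B
    have hB : ∀ j, j ∉ S → Finset.univ.filter (fun S' => 0 < e' S' ∧ j ∈ S')
        ⊆ Finset.univ.filter (fun S' => 0 < e' S' ∧ S ⊂ S') := by
      intro j hj S' hS'
      rw [Finset.mem_filter] at *
      obtain ⟨-, h1, h2⟩ := hS'
      refine ⟨Finset.mem_univ _, h1, ?_⟩
      rcases hchain S' S h1 hpos with h | h
      · exact absurd (h h2) hj
      · exact Finset.ssubset_iff_subset_ne.2 ⟨h, fun he => hj (he ▸ h2)⟩
    -- Claim C
    have hC : (Finset.univ.filter (fun S' => 0 < e' S' ∧ S ⊂ S')).Nonempty →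
        ∃ j, j ∉ S ∧ Finset.univ.filter (fun S' => 0 < e' S' ∧ j ∈ S')
          = Finset.univ.filter (fun S' => 0 < e' S' ∧ S ⊂ S') := by
      intro hne
      obtain ⟨V, hV, hVmin⟩ := Finset.exists_min_image _ Finset.card hne
      rw [Finset.mem_filter] at hV
      obtain ⟨j, hjV, hjS⟩ := Finset.exists_of_ssubset hV.2.2
      refine ⟨j, hjS, ?_⟩
      ext S'
      simp only [Finset.mem_filter, Finset.mem_univ, true_and]
      constructor
      · rintro ⟨h1, h2⟩
        refine ⟨h1, ?_⟩
        rcases hchain S' S h1 hpos with h | h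
        · exact absurd (h h2) hjS
        · exact Finset.ssubset_iff_subset_ne.2 ⟨h, fun he => hjS (he ▸ h2)⟩
      · rintro ⟨h1, h2⟩
        refine ⟨h1, ?_⟩
        rcases hchain S' V h1 hV.2.1 with h | h
        · have hcard := hVmin S' (Finset.mem_filter.2 ⟨Finset.mem_univ _, h1, h2⟩)
          exact (Finset.eq_of_subset_of_card_le h hcard) ▸ hjV
        · exact h hjV
    -- split F = e' S + G
    have hsplit : Finset.univ.filter (fun S' => 0 < e' S' ∧ S ⊆ S')
        = insert S (Finset.univ.filter (fun S' => 0 < e' S' ∧ S ⊂ S')) := by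
      ext S'
      simp only [Finset.mem_insert, Finset.mem_filter, Finset.mem_univ, true_and]
      constructor
      · rintro ⟨h1, h2⟩
        by_cases heq : S = S'
        · exact Or.inl heq.symm
        · exact Or.inr ⟨h1, Finset.ssubset_iff_subset_ne.2 ⟨h2, heq⟩⟩
      · rintro (rfl | ⟨h1, h2⟩)
        · exact ⟨hpos, Finset.Subset.refl _⟩
        · exact ⟨h1, h2.subset⟩
    have hSnotmem : S ∉ Finset.univ.filter (fun S' => 0 < e' S' ∧ S ⊂ S') := by
      simp only [Finset.mem_filter]
      rintro ⟨-, -, h⟩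
      exact (Finset.ssubset_iff_subset_ne.1 h).2 rfl
    have hFG : ∑ S' ∈ Finset.univ.filter (fun S' => 0 < e' S' ∧ S ⊆ S'), e' S'
        = e' S + ∑ S' ∈ Finset.univ.filter (fun S' => 0 < e' S' ∧ S ⊂ S'), e' S' := by
      rw [hsplit, Finset.sum_insert hSnotmem]
    have hFle : ∀ j ∈ S,
        ∑ S' ∈ Finset.univ.filter (fun S' => 0 < e' S' ∧ S ⊆ S'), e' S' ≤ a j := by
      intro j hj
      rw [← hsum' j]
      apply Finset.sum_le_sum_of_subset
      intro S' hS'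
      rw [Finset.mem_filter] at *
      exact ⟨hS'.1, hS'.2.1, hS'.2.2 hj⟩
    have hGge : ∀ j, j ∉ S →
        a j ≤ ∑ S' ∈ Finset.univ.filter (fun S' => 0 < e' S' ∧ S ⊂ S'), e' S' := by
      intro j hj
      rw [← hsum' j]
      exact Finset.sum_le_sum_of_subset (hB j hj)
    have htset : tset a S = Finset.Ioc
        (∑ S' ∈ Finset.univ.filter (fun S' => 0 < e' S' ∧ S ⊂ S'), e' S')
        (∑ S' ∈ Finset.univ.filter (fun S' => 0 < e' S' ∧ S ⊆ S'), e' S') := by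
      ext t
      rw [mem_tset, Finset.mem_Ioc]
      constructor
      · rintro ⟨⟨h1, h2⟩, h3⟩
        constructor
        · by_cases hne : (Finset.univ.filter (fun S' => 0 < e' S' ∧ S ⊂ S')).Nonempty
          · obtain ⟨j, hjS, hfil⟩ := hC hne
            have haj : a j = ∑ S' ∈ Finset.univ.filter
                (fun S' => 0 < e' S' ∧ S ⊂ S'), e' S' := by
              rw [← hsum' j, hfil]
            have hlt : a j < t := by
              by_contra hc
              push_neg at hc
              exact hjS (h3 ▸ mem_upSet.2 hc)
            omega
          · rw [Finset.not_nonempty_iff_eq_empty] at hne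
            rw [hne, Finset.sum_empty]
            omega
        · obtain ⟨j, hjS, hfil⟩ := hA
          have haj : a j = ∑ S' ∈ Finset.univ.filter
              (fun S' => 0 < e' S' ∧ S ⊆ S'), e' S' := by
            rw [← hsum' j, hfil]
          rw [← h3] at hjS
          have := mem_upSet.1 hjS
          omega
      · rintro ⟨h1, h2⟩
        have h1' : 1 ≤ t := by omega
        have hup : upSet a t = S := by
          ext j
          rw [mem_upSet]
          constructor
          · intro hle
            by_contra hjS
            have := hGge j hjS
            omega
          · intro hj
            have := hFle j hj
            omega
        refine ⟨⟨h1', ?_⟩, hup⟩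
        obtain ⟨j, hj⟩ := hSne
        calc t ≤ _ := h2
        _ ≤ a j := hFle j hj
        _ ≤ Finset.univ.sup a := Finset.le_sup (Finset.mem_univ j)
    rw [ee, htset, Nat.card_Ioc]
    omega

variable {n : ℕ}

lemma succ_lt (i : Fin (2 ^ n - 1)) : (i : ℕ) + 1 < 2 ^ n := by
  have h1 := i.isLt
  have h2 := Nat.one_le_two_pow (n := n)
  omega

lemma bitset_succ_nonempty (i : Fin (2 ^ n - 1)) : (bitset n ((i : ℕ) + 1)).Nonempty := by
  rw [Finset.nonempty_iff_ne_empty]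
  intro he
  have h := maskOf_bitset (succ_lt i)
  rw [he, maskOf_empty] at h
  omega

lemma exists_idx {S : Finset (Fin n)} (hS : S.Nonempty) :
    ∃ i : Fin (2 ^ n - 1), bitset n ((i : ℕ) + 1) = S := by
  have h1 := maskOf_pos hS
  have h2 := maskOf_lt S
  refine ⟨⟨maskOf S - 1, by omega⟩, ?_⟩
  have h3 : ((⟨maskOf S - 1, by omega⟩ : Fin (2 ^ n - 1)) : ℕ) + 1 = maskOf S := by
    simp only []
    omega
  rw [h3, bitset_maskOf]

lemma idx_injective {i i' : Fin (2 ^ n - 1)}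
    (h : bitset n ((i : ℕ) + 1) = bitset n ((i' : ℕ) + 1)) : i = i' := by
  have h1 := maskOf_bitset (succ_lt i)
  have h2 := maskOf_bitset (succ_lt i')
  rw [h] at h1
  apply Fin.ext
  omega

lemma fiber_eq_singleton (i : Fin (2 ^ n - 1)) :
    (Finset.univ.filter
      (fun i' : Fin (2 ^ n - 1) => bitset n ((i' : ℕ) + 1) = bitset n ((i : ℕ) + 1))) = {i} := by
  ext i'
  simp only [Finset.mem_filter, Finset.mem_univ, true_and, Finset.mem_singleton]
  exact ⟨fun h => idx_injective h, fun h => by rw [h]⟩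

lemma fiber_sum (g : Finset (Fin n) → ℕ) (hg : g ∅ = 0) (S : Finset (Fin n)) :
    ∑ i ∈ Finset.univ.filter (fun i : Fin (2 ^ n - 1) => bitset n ((i : ℕ) + 1) = S),
      g (bitset n ((i : ℕ) + 1)) = g S := by
  rcases S.eq_empty_or_nonempty with rfl | hS
  · rw [hg]
    apply Finset.sum_eq_zero
    intro i hi
    rw [Finset.mem_filter] at hi
    exact absurd hi.2 (Finset.nonempty_iff_ne_empty.1 (bitset_succ_nonempty i))
  · obtain ⟨i, hi⟩ := exists_idx hS
    rw [← hi, fiber_eq_singleton i, Finset.sum_singleton]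

lemma fiber_sum_f (f : Fin (2 ^ n - 1) → ℕ) (i : Fin (2 ^ n - 1)) :
    ∑ i' ∈ Finset.univ.filter
      (fun i' : Fin (2 ^ n - 1) => bitset n ((i' : ℕ) + 1) = bitset n ((i : ℕ) + 1)), f i'
      = f i := by
  rw [fiber_eq_singleton i, Finset.sum_singleton]

/-- transfer of `j`-restricted sums -/
lemma sum_bit (g : Finset (Fin n) → ℕ) (hg : g ∅ = 0) (j : Fin n) :
    ∑ i : Fin (2 ^ n - 1),
      (if ((i : ℕ) + 1).testBit (j : ℕ) then g (bitset n ((i : ℕ) + 1)) else 0)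
      = ∑ S ∈ Finset.univ.filter (fun S : Finset (Fin n) => j ∈ S), g S := by
  classical
  rw [Finset.sum_congr rfl (fun S hS => (fiber_sum g hg S).symm),
    Finset.sum_fiberwise_eq_sum_filter, Finset.sum_filter]
  apply Finset.sum_congr rfl
  intro i _
  by_cases hb : ((i : ℕ) + 1).testBit (j : ℕ)
  · rw [if_pos hb, if_pos]
    simp [mem_bitset, hb]
  · rw [if_neg hb, if_neg]
    simp [mem_bitset, hb]

/-- transfer of full sums -/
lemma sum_all (g : Finset (Fin n) → ℕ) (hg : g ∅ = 0) :
    ∑ i : Fin (2 ^ n - 1), g (bitset n ((i : ℕ) + 1)) = ∑ S : Finset (Fin n), g S := by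
  classical
  rw [Finset.sum_congr rfl (fun S hS => (fiber_sum g hg S).symm),
    Finset.sum_fiberwise_eq_sum_filter]
  simp

/-- same, with an arbitrary function of the index -/
lemma sum_bit_f (f : Fin (2 ^ n - 1) → ℕ) (j : Fin n) :
    ∑ i : Fin (2 ^ n - 1), (if ((i : ℕ) + 1).testBit (j : ℕ) then f i else 0)
      = ∑ S ∈ Finset.univ.filter (fun S : Finset (Fin n) => j ∈ S),
          ∑ i ∈ Finset.univ.filter
            (fun i : Fin (2 ^ n - 1) => bitset n ((i : ℕ) + 1) = S), f i := by
  classical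
  rw [Finset.sum_fiberwise_eq_sum_filter, Finset.sum_filter]
  apply Finset.sum_congr rfl
  intro i _
  by_cases hb : ((i : ℕ) + 1).testBit (j : ℕ)
  · rw [if_pos hb, if_pos]
    simp [mem_bitset, hb]
  · rw [if_neg hb, if_neg]
    simp [mem_bitset, hb]

section lcmfact

lemma lcm_ne_zero' {ι : Type*} [DecidableEq ι] (s : Finset ι) (f : ι → ℕ)
    (hf : ∀ i ∈ s, f i ≠ 0) : s.lcm f ≠ 0 := by
  induction s using Finset.induction_on with
  | empty => simp
  | @insert b s hb ih =>
      rw [Finset.lcm_insert, lcm_eq_nat_lcm]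
      exact Nat.lcm_ne_zero (hf _ (Finset.mem_insert_self _ _))
        (ih fun i hi => hf i (Finset.mem_insert_of_mem hi))

lemma factorization_lcm_apply {ι : Type*} [DecidableEq ι] (s : Finset ι) (f : ι → ℕ)
    (hf : ∀ i ∈ s, f i ≠ 0) (q : ℕ) :
    (s.lcm f).factorization q = s.sup (fun i => (f i).factorization q) := by
  induction s using Finset.induction_on with
  | empty => simp
  | @insert b s hb ih =>
      rw [Finset.lcm_insert, lcm_eq_nat_lcm,
        Nat.factorization_lcm (hf _ (Finset.mem_insert_self _ _))
          (lcm_ne_zero' s f (fun i hi => hf i (Finset.mem_insert_of_mem hi))),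
        Finsupp.sup_apply, Finset.sup_insert,
        ih (fun i hi => hf i (Finset.mem_insert_of_mem hi))]

end lcmfact

section main

variable {n : ℕ} (y : Fin n → ℕ)

/-- the per-prime exponent profile -/
def aprof (q : ℕ) : Fin n → ℕ := fun j => (y j).factorization q

/-- the exponent of prime `q` in `z i` -/
def EE (q : ℕ) (i : Fin (2 ^ n - 1)) : ℕ := ee (aprof y q) (bitset n ((i : ℕ) + 1))

/-- the canonical reduced tuple -/
def zz (i : Fin (2 ^ n - 1)) : ℕ :=
  ∏ p ∈ (Finset.univ.lcm y).primeFactors, p ^ EE y p i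

variable (hy : ∀ j, 0 < y j)
include hy

omit hy in
lemma hL0' (hy : ∀ j, 0 < y j) : Finset.univ.lcm y ≠ 0 :=
  lcm_ne_zero' _ _ (fun j _ => (hy j).ne')

lemma EE_zero {q : ℕ} (hq : q ∉ (Finset.univ.lcm y).primeFactors) (i : Fin (2 ^ n - 1)) :
    EE y q i = 0 := by
  have ha : ∀ j, (y j).factorization q = 0 := by
    intro j
    by_cases hqp : q.Prime
    · by_contra hc
      have hdvd : q ∣ y j := (hqp.dvd_iff_one_le_factorization (hy j).ne').2
        (Nat.pos_of_ne_zero hc)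
      exact hq (Nat.mem_primeFactors.2 ⟨hqp,
        hdvd.trans (Finset.dvd_lcm (Finset.mem_univ j)), hL0' y hy⟩)
    · exact Nat.factorization_eq_zero_of_not_prime _ hqp
  have hsup : Finset.univ.sup (aprof y q) = 0 := by
    apply Nat.le_zero.1
    apply Finset.sup_le
    intro j _
    exact (ha j).le
  have h := ee_le_sup (aprof y q) (bitset n ((i : ℕ) + 1))
  rw [hsup] at h
  rw [EE]
  omega

lemma zz_pos (i : Fin (2 ^ n - 1)) : 0 < zz y i := by
  apply Finset.prod_pos
  intro p hp
  exact pow_pos (Nat.prime_of_mem_primeFactors hp).pos _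

lemma factorization_zz (i : Fin (2 ^ n - 1)) (q : ℕ) :
    (zz y i).factorization q = EE y q i := by
  rw [zz, Nat.factorization_prod
    (fun p hp => pow_ne_zero _ (Nat.prime_of_mem_primeFactors hp).pos.ne')]
  rw [Finsupp.finset_sum_apply]
  have hterm : ∀ p ∈ (Finset.univ.lcm y).primeFactors,
      ((p ^ EE y p i).factorization) q = if p = q then EE y p i else 0 := by
    intro p hp
    rw [Nat.factorization_pow, Finsupp.smul_apply,
      (Nat.prime_of_mem_primeFactors hp).factorization, Finsupp.single_apply]
    simp [smul_eq_mul, mul_ite]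
  rw [Finset.sum_congr rfl hterm, Finset.sum_ite_eq']
  by_cases hq : q ∈ (Finset.univ.lcm y).primeFactors
  · rw [if_pos hq]
  · rw [if_neg hq, EE_zero y hy hq]

lemma prod_eq (j : Fin n) :
    y j = ∏ i : Fin (2 ^ n - 1),
      zz y i ^ (if Nat.testBit ((i : ℕ) + 1) (j : ℕ) then 1 else 0) := by
  have hne : (∏ i : Fin (2 ^ n - 1),
      zz y i ^ (if Nat.testBit ((i : ℕ) + 1) (j : ℕ) then 1 else 0)) ≠ 0 :=
    (Finset.prod_pos (fun i _ => pow_pos (zz_pos y hy i) _)).ne'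
  apply Nat.factorization_inj (Set.mem_setOf.2 (hy j).ne') (Set.mem_setOf.2 hne)
  ext q
  rw [Nat.factorization_prod (fun i _ => pow_ne_zero _ (zz_pos y hy i).ne'),
    Finsupp.finset_sum_apply]
  have hterm : ∀ i : Fin (2 ^ n - 1),
      ((zz y i ^ (if Nat.testBit ((i : ℕ) + 1) (j : ℕ) then 1 else 0)).factorization) q
      = if Nat.testBit ((i : ℕ) + 1) (j : ℕ) then ee (aprof y q) (bitset n ((i : ℕ) + 1))
        else 0 := by
    intro i
    by_cases hb : Nat.testBit ((i : ℕ) + 1) (j : ℕ)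
    · rw [if_pos hb, if_pos hb, pow_one, factorization_zz y hy, EE]
    · rw [if_neg hb, if_neg hb, pow_zero, Nat.factorization_one]
      rfl
  rw [Finset.sum_congr rfl (fun i _ => hterm i), sum_bit _ (ee_empty _) j,
    sum_ee (aprof y q) j]
  rfl

lemma reduced : ReducedTuple (zz y) := by
  intro h l hd1 hd2
  by_contra hg
  obtain ⟨p, hp, hdh, hdl⟩ := Nat.Prime.not_coprime_iff_dvd.1 hg
  have h1 : 0 < EE y p h := by
    rw [← factorization_zz y hy]
    exact (hp.dvd_iff_one_le_factorization (zz_pos y hy h).ne').1 hdh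
  have h2 : 0 < EE y p l := by
    rw [← factorization_zz y hy]
    exact (hp.dvd_iff_one_le_factorization (zz_pos y hy l).ne').1 hdl
  rw [EE] at h1 h2
  rcases ee_chain h1 h2 with hsub | hsub
  · exact hd1 ((dominates_iff_bitset_subset (succ_lt h)).2 hsub)
  · exact hd2 ((dominates_iff_bitset_subset (succ_lt l)).2 hsub)

lemma lcm_eq : Finset.univ.lcm y = ∏ i : Fin (2 ^ n - 1), zz y i := by
  have hne : (∏ i : Fin (2 ^ n - 1), zz y i) ≠ 0 :=
    (Finset.prod_pos (fun i _ => zz_pos y hy i)).ne'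
  apply Nat.factorization_inj (Set.mem_setOf.2 (hL0' y hy)) (Set.mem_setOf.2 hne)
  ext q
  rw [Nat.factorization_prod (fun i _ => (zz_pos y hy i).ne'), Finsupp.finset_sum_apply,
    factorization_lcm_apply _ _ (fun j _ => (hy j).ne') q]
  have hterm : ∀ i : Fin (2 ^ n - 1),
      ((zz y i).factorization) q = ee (aprof y q) (bitset n ((i : ℕ) + 1)) := by
    intro i
    rw [factorization_zz y hy, EE]
  rw [Finset.sum_congr rfl (fun i _ => hterm i), sum_all _ (ee_empty _),
    sum_ee_total (aprof y q)]
  rfl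

lemma unique (z' : Fin (2 ^ n - 1) → ℕ) (h1 : ∀ i, 0 < z' i) (h2 : ReducedTuple z')
    (h3 : ∀ j : Fin n, y j = ∏ i : Fin (2 ^ n - 1),
      z' i ^ (if Nat.testBit ((i : ℕ) + 1) (j : ℕ) then 1 else 0)) :
    z' = zz y := by
  funext i
  apply Nat.factorization_inj (Set.mem_setOf.2 (h1 i).ne')
    (Set.mem_setOf.2 (zz_pos y hy i).ne')
  ext q
  rw [factorization_zz y hy]
  have key := ee_unique (aprof y q)
    (fun S => ∑ i' ∈ Finset.univ.filter
      (fun i' : Fin (2 ^ n - 1) => bitset n ((i' : ℕ) + 1) = S), (z' i').factorization q)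
    ?_ ?_ ?_
  · have hk := key (bitset n ((i : ℕ) + 1))
    rw [fiber_sum_f] at hk
    rw [hk, EE]
  · -- e' ∅ = 0
    apply Finset.sum_eq_zero
    intro i' hi'
    rw [Finset.mem_filter] at hi'
    exact absurd hi'.2 (Finset.nonempty_iff_ne_empty.1 (bitset_succ_nonempty i'))
  · -- chain
    intro S S' hS hS'
    obtain ⟨i1, hi1mem, hi1⟩ := Finset.exists_ne_zero_of_sum_ne_zero hS.ne'
    obtain ⟨i2, hi2mem, hi2⟩ := Finset.exists_ne_zero_of_sum_ne_zero hS'.ne'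
    have hb1 : bitset n ((i1 : ℕ) + 1) = S := (Finset.mem_filter.1 hi1mem).2
    have hb2 : bitset n ((i2 : ℕ) + 1) = S' := (Finset.mem_filter.1 hi2mem).2
    have hqp : q.Prime := by
      by_contra hc
      rw [Nat.factorization_eq_zero_of_not_prime _ hc] at hi1
      exact hi1 rfl
    by_cases hd : Dominates ((i1 : ℕ) + 1) ((i2 : ℕ) + 1)
    · left
      rw [← hb1, ← hb2]
      exact (dominates_iff_bitset_subset (succ_lt i1)).1 hd
    by_cases hd2 : Dominates ((i2 : ℕ) + 1) ((i1 : ℕ) + 1)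
    · right
      rw [← hb1, ← hb2]
      exact (dominates_iff_bitset_subset (succ_lt i2)).1 hd2
    exfalso
    have hgcd := h2 i1 i2 hd hd2
    have hq1 : q ∣ z' i1 := (hqp.dvd_iff_one_le_factorization (h1 i1).ne').2
      (Nat.pos_of_ne_zero hi1)
    have hq2 : q ∣ z' i2 := (hqp.dvd_iff_one_le_factorization (h1 i2).ne').2
      (Nat.pos_of_ne_zero hi2)
    have hq1' : q = 1 := Nat.dvd_one.1 (hgcd ▸ Nat.dvd_gcd hq1 hq2)
    have := hqp.two_le
    omega
  · -- sums
    intro j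
    rw [← sum_bit_f (fun i' => (z' i').factorization q) j]
    have hterm : ∀ i' : Fin (2 ^ n - 1),
        (if Nat.testBit ((i' : ℕ) + 1) (j : ℕ) then (z' i').factorization q else 0)
        = ((z' i' ^ (if Nat.testBit ((i' : ℕ) + 1) (j : ℕ) then 1 else 0)).factorization) q := by
      intro i'
      by_cases hb : Nat.testBit ((i' : ℕ) + 1) (j : ℕ)
      · rw [if_pos hb, if_pos hb, pow_one]
      · rw [if_neg hb, if_neg hb, pow_zero, Nat.factorization_one]
        rfl
    rw [Finset.sum_congr rfl (fun i' _ => hterm i'), ← Finsupp.finset_sum_apply,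
      ← Nat.factorization_prod (fun i' _ => pow_ne_zero _ (h1 i').ne'), ← h3 j]
    rfl

end main

end St3

theorem statement3 (n : ℕ) (hn : 1 ≤ n) (y : Fin n → ℕ) (hy : ∀ j, 0 < y j) :
    (∃! z : Fin (2 ^ n - 1) → ℕ,
      (∀ i, 0 < z i) ∧ ReducedTuple z ∧
        ∀ j : Fin n, y j = ∏ i : Fin (2 ^ n - 1),
          z i ^ (if Nat.testBit ((i : ℕ) + 1) (j : ℕ) then 1 else 0)) ∧
    ∀ z : Fin (2 ^ n - 1) → ℕ,
      ((∀ i, 0 < z i) ∧ ReducedTuple z ∧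
        ∀ j : Fin n, y j = ∏ i : Fin (2 ^ n - 1),
          z i ^ (if Nat.testBit ((i : ℕ) + 1) (j : ℕ) then 1 else 0)) →
      Finset.univ.lcm y = ∏ i : Fin (2 ^ n - 1), z i := by
  constructor
  · refine ⟨St3.zz y, ⟨fun i => St3.zz_pos y hy i, St3.reduced y hy,
      fun j => St3.prod_eq y hy j⟩, ?_⟩
    intro z' hz'
    exact St3.unique y hy z' hz'.1 hz'.2.1 hz'.2.2
  · intro z' hz'
    rw [St3.unique y hy z' hz'.1 hz'.2.1 hz'.2.2]
    exact St3.lcm_eq y hy
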